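/- For every positive integer p, Σ_{n=0}^{∞} (-1)^{n}·( H_{p(n+1)} - H_{pn} ) = ln 2/p + (π/(2p))·Σ_{k=1}^{p-1} csc(kπ/p). -/

import Mathlib

open Real Filter Topology Finset MeasureTheory Set

lemma beta_val {a : ℝ} (h0 : 0 < a) (h1 : a < 1) :
    ∫ x in Set.Ioo (0:ℝ) 1, x ^ (a-1) * (1-x) ^ (-a) = π / Real.sin (π * a) := by
  have key : ((∫ x in Set.Ioo (0:ℝ) 1, x ^ (a-1) * (1-x) ^ (-a) : ℝ) : ℂ)
      = Complex.betaIntegral a (1 - a) := by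
    rw [Complex.betaIntegral, intervalIntegral.integral_of_le zero_le_one,
      MeasureTheory.integral_Ioc_eq_integral_Ioo]
    have : ∫ t in Set.Ioo (0:ℝ) 1, ((t:ℂ) ^ ((a:ℂ) - 1) * (1 - (t:ℂ)) ^ (1 - (a:ℂ) - 1))
        = ∫ t in Set.Ioo (0:ℝ) 1, ((t ^ (a-1) * (1-t) ^ (-a) : ℝ) : ℂ) := by
      refine setIntegral_congr_fun measurableSet_Ioo (fun x hx => ?_)
      rw [show (1 : ℂ) - (a:ℂ) - 1 = (((-a : ℝ)):ℂ) by push_cast; ring,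
        show (a:ℂ) - 1 = (((a - 1 : ℝ)):ℂ) by push_cast; ring,
        show (1 : ℂ) - (x:ℂ) = (((1 - x : ℝ)):ℂ) by push_cast; ring,
        ← Complex.ofReal_cpow hx.1.le, ← Complex.ofReal_cpow (by linarith [hx.2])]
      push_cast; ring
    rw [this]; exact (integral_ofReal).symm
  have hβ := Complex.Gamma_mul_Gamma_eq_betaIntegral (s := (a:ℂ)) (t := 1 - (a:ℂ))
    (by simpa using h0) (by simp; linarith)
  rw [show (a:ℂ) + (1 - (a:ℂ)) = 1 by ring, Complex.Gamma_one, one_mul] at hβ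
  have hc : ((∫ x in Set.Ioo (0:ℝ) 1, x ^ (a-1) * (1-x) ^ (-a) : ℝ) : ℂ)
      = ((π / Real.sin (π * a) : ℝ) : ℂ) := by
    rw [key, ← hβ, show (1 - (a:ℂ)) = ((1 - a : ℝ) : ℂ) by push_cast; ring,
      Complex.Gamma_ofReal, Complex.Gamma_ofReal, ← Complex.ofReal_mul,
      Real.Gamma_mul_Gamma_one_sub]
  exact_mod_cast hc

lemma J_val {a : ℝ} (h0 : 0 < a) (h1 : a < 1) :
    ∫ t in Set.Ioi (0:ℝ), t ^ (a-1) / (1+t) = π / Real.sin (π * a) := by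
  have himg : (fun u => u / (1 - u)) '' Set.Ioo (0:ℝ) 1 = Set.Ioi (0:ℝ) := by
    ext t
    constructor
    · rintro ⟨u, ⟨hu0, hu1⟩, rfl⟩
      exact div_pos hu0 (by linarith)
    · intro ht
      have ht' : (0:ℝ) < t := ht
      refine ⟨t / (1 + t), ⟨div_pos ht' (by linarith), by
        rw [div_lt_one (by linarith)]; linarith⟩, ?_⟩
      field_simp
      ring
  have hderiv : ∀ u ∈ Set.Ioo (0:ℝ) 1, HasDerivWithinAt (fun u => u / (1 - u))
      (((1 - u) ^ 2)⁻¹) (Set.Ioo (0:ℝ) 1) u := by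
    intro u hu
    have hne : (1:ℝ) - u ≠ 0 := by have := hu.2; intro h; linarith [hu.2]
    have h := (hasDerivAt_id u).div ((hasDerivAt_id u).const_sub 1) hne
    refine (h.congr_deriv ?_).hasDerivWithinAt
    show (1 * (1 - u) - u * -1) / (1 - u)^2 = ((1-u)^2)⁻¹
    rw [inv_eq_one_div]; congr 1; ring
  have hinj : Set.InjOn (fun u => u / (1 - u)) (Set.Ioo (0:ℝ) 1) := by
    intro u hu v hv h
    have h1 : (1:ℝ) - u ≠ 0 := by intro h'; linarith [hu.2]
    have h2 : (1:ℝ) - v ≠ 0 := by intro h'; linarith [hv.2]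
    field_simp at h
    linarith
  rw [← himg, MeasureTheory.integral_image_eq_integral_abs_deriv_smul measurableSet_Ioo
    hderiv hinj]
  rw [← beta_val h0 h1]
  refine setIntegral_congr_fun measurableSet_Ioo (fun u hu => ?_)
  have hu0 : (0:ℝ) < u := hu.1
  have hv : (0:ℝ) < 1 - u := by linarith [hu.2]
  have h1u : 1 + u / (1 - u) = (1 - u)⁻¹ := by field_simp; ring
  have hdr : (u / (1 - u)) ^ (a - 1) = u ^ (a-1) * (1-u) ^ (1-a) := by
    rw [Real.div_rpow hu0.le hv.le, div_eq_mul_inv, ← Real.rpow_neg hv.le]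
    ring_nf
  simp only [smul_eq_mul, h1u, hdr]
  rw [abs_of_pos (by positivity), div_inv_eq_mul]
  have : ((1 - u) ^ 2)⁻¹ = (1-u) ^ (-2 : ℝ) := by
    rw [← Real.rpow_two, ← Real.rpow_neg hv.le]
  rw [this]
  have hadd : (1-u:ℝ)^(-2:ℝ) * ((1-u)^(1-a) * (1-u)^(1:ℝ)) = (1-u)^(-a) := by
    rw [← Real.rpow_add hv, ← Real.rpow_add hv]; congr 1; ring
  rw [Real.rpow_one] at hadd
  linear_combination u ^ (a-1) * hadd

lemma int_Ioi_eq {p j : ℕ} (hp : 0 < p) (hj : j + 1 < p) :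
    ∫ x in Set.Ioi (0:ℝ), x ^ j / (1 + x ^ p)
      = (π / Real.sin (π * ((j+1 : ℕ) / p))) / p := by
  set a : ℝ := ((j+1 : ℕ) : ℝ) / p with ha
  have hpR : (0:ℝ) < p := by exact_mod_cast hp
  have ha0 : 0 < a := by positivity
  have ha1 : a < 1 := by
    rw [ha, div_lt_one hpR]; exact_mod_cast hj
  have hpa : (p : ℝ) * a = (j : ℝ) + 1 := by
    rw [ha]; field_simp; norm_num
  have himg : (fun x : ℝ => x ^ p) '' Set.Ioi (0:ℝ) = Set.Ioi (0:ℝ) := by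
    ext t; constructor
    · rintro ⟨x, hx, rfl⟩; exact pow_pos (show (0:ℝ) < x from hx) p
    · intro ht
      have ht' : (0:ℝ) < t := ht
      refine ⟨t ^ ((p:ℝ)⁻¹), Real.rpow_pos_of_pos ht' _, ?_⟩
      show (t ^ ((p:ℝ)⁻¹)) ^ p = t
      rw [← Real.rpow_natCast (t ^ ((p:ℝ)⁻¹)) p, ← Real.rpow_mul ht'.le,
        inv_mul_cancel₀ (by positivity), Real.rpow_one]
  have hderiv : ∀ x ∈ Set.Ioi (0:ℝ), HasDerivWithinAt (fun x : ℝ => x ^ p)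
      ((p : ℝ) * x ^ (p-1)) (Set.Ioi (0:ℝ)) x :=
    fun x _ => (hasDerivAt_pow p x).hasDerivWithinAt
  have hinj : Set.InjOn (fun x : ℝ => x ^ p) (Set.Ioi (0:ℝ)) :=
    (pow_left_strictMonoOn₀ (M₀ := ℝ) hp.ne').injOn.mono (fun x (hx : (0:ℝ) < x) => show x ∈ {a : ℝ | 0 ≤ a} from le_of_lt hx)
  have key : ∫ t in Set.Ioi (0:ℝ), t ^ (a-1) / (1+t)
      = ∫ x in Set.Ioi (0:ℝ), (p : ℝ) * (x ^ j / (1 + x ^ p)) := by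
    calc ∫ t in Set.Ioi (0:ℝ), t ^ (a-1) / (1+t)
        = ∫ t in (fun x : ℝ => x ^ p) '' Set.Ioi (0:ℝ), t ^ (a-1) / (1+t) := by rw [himg]
      _ = ∫ x in Set.Ioi (0:ℝ), |(p : ℝ) * x ^ (p-1)| • ((x ^ p) ^ (a-1) / (1 + x ^ p)) :=
          MeasureTheory.integral_image_eq_integral_abs_deriv_smul measurableSet_Ioi
            hderiv hinj _
      _ = ∫ x in Set.Ioi (0:ℝ), (p : ℝ) * (x ^ j / (1 + x ^ p)) := ?_
    refine setIntegral_congr_fun measurableSet_Ioi (fun x hx => ?_)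
    have hx0 : (0:ℝ) < x := hx
    have hxp : (x:ℝ) ^ p > 0 := pow_pos hx0 p
    have e1 : ((x:ℝ) ^ p) ^ (a - 1) = x ^ ((p:ℝ) * (a-1)) := by
      rw [← Real.rpow_natCast x p, ← Real.rpow_mul hx0.le]
    have e2 : (x:ℝ) ^ (p - 1 : ℕ) = x ^ (((p:ℝ)) - 1) := by
      rw [← Real.rpow_natCast x (p-1), Nat.cast_sub hp, Nat.cast_one]
    have e3 : (x:ℝ) ^ j = x ^ ((j:ℝ)) := (Real.rpow_natCast x j).symm
    rw [smul_eq_mul, abs_of_pos (by positivity), e1, e2, e3]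
    have e4 : x ^ (((p:ℝ)) - 1) * (x ^ ((p:ℝ) * (a-1))) = x ^ ((j:ℝ)) := by
      rw [← Real.rpow_add hx0]; congr 1; nlinarith [hpa]
    have hne : (1:ℝ) + x ^ p ≠ 0 := by positivity
    field_simp
    linear_combination e4
  rw [MeasureTheory.integral_const_mul, J_val ha0 ha1] at key
  rw [eq_div_iff hpR.ne', key, mul_comm]

lemma den_pos {x : ℝ} (hx : 0 ≤ x) (p : ℕ) : (0:ℝ) < 1 + x ^ p := by positivity

lemma intgOn_Ioo (m p : ℕ) :
    IntegrableOn (fun x : ℝ => x ^ m / (1 + x ^ p)) (Set.Ioo 0 1) := by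
  refine ((ContinuousOn.div (Continuous.continuousOn (by continuity))
    (Continuous.continuousOn (by continuity)) ?_).integrableOn_compact isCompact_Icc).mono_set
    Set.Ioo_subset_Icc_self
  exact fun x hx => (den_pos hx.1 p).ne'

lemma inv_img : (fun u : ℝ => u⁻¹) '' Set.Ioo (0:ℝ) 1 = Set.Ioi (1:ℝ) := by
  ext t; constructor
  · rintro ⟨u, ⟨hu0, hu1⟩, rfl⟩
    exact Set.mem_Ioi.2 ((one_lt_inv₀ hu0).2 hu1)
  · intro ht
    have ht1 : (1:ℝ) < t := ht
    have ht0 : (0:ℝ) < t := by linarith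
    exact ⟨t⁻¹, ⟨inv_pos.2 ht0, inv_lt_one_of_one_lt₀ ht1⟩, inv_inv t⟩

lemma inv_deriv : ∀ u ∈ Set.Ioo (0:ℝ) 1, HasDerivWithinAt (fun u : ℝ => u⁻¹)
    (-(u^2)⁻¹) (Set.Ioo (0:ℝ) 1) u :=
  fun u hu => (hasDerivAt_inv hu.1.ne').hasDerivWithinAt

lemma my_inv_inj : Set.InjOn (fun u : ℝ => u⁻¹) (Set.Ioo (0:ℝ) 1) :=
  fun u hu v hv h => by
    have h' : u⁻¹ = v⁻¹ := h
    have := congrArg (·⁻¹) h'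
    simpa [inv_inv] using this

lemma inv_pointwise {i j p : ℕ} (hp : p = i + j + 2) {u : ℝ} (hu : u ∈ Set.Ioo (0:ℝ) 1) :
    |(-(u^2)⁻¹)| • ((u⁻¹) ^ j / (1 + (u⁻¹) ^ p)) = u ^ i / (1 + u ^ p) := by
  have hu0 : (0:ℝ) < u := hu.1
  have hne : (0:ℝ) < 1 + u ^ p := den_pos hu0.le p
  subst hp
  rw [smul_eq_mul, abs_neg, abs_of_pos (by positivity), inv_pow u, inv_pow u]
  rw [show (1 + (u ^ (i+j+2))⁻¹) = (u ^ (i+j+2) + 1) / u ^ (i+j+2) by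
    field_simp]
  field_simp
  ring

lemma int_Ioi1 {i j p : ℕ} (hp : p = i + j + 2) :
    ∫ x in Set.Ioi (1:ℝ), x ^ j / (1 + x ^ p)
      = ∫ u in Set.Ioo (0:ℝ) 1, u ^ i / (1 + u ^ p) := by
  rw [← inv_img, MeasureTheory.integral_image_eq_integral_abs_deriv_smul measurableSet_Ioo
    inv_deriv my_inv_inj]
  exact setIntegral_congr_fun measurableSet_Ioo (fun u hu => inv_pointwise hp hu)

lemma intgOn_Ioi1 {i j p : ℕ} (hp : p = i + j + 2) :
    IntegrableOn (fun x : ℝ => x ^ j / (1 + x ^ p)) (Set.Ioi 1) := by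
  rw [← inv_img, MeasureTheory.integrableOn_image_iff_integrableOn_abs_deriv_smul
    measurableSet_Ioo inv_deriv my_inv_inj]
  exact (intgOn_Ioo i p).congr_fun (fun u hu => (inv_pointwise hp hu).symm) measurableSet_Ioo

lemma pair_eq {i j p : ℕ} (hp : p = i + j + 2) :
    (∫ x in Set.Ioo (0:ℝ) 1, x ^ j / (1 + x ^ p))
      + (∫ x in Set.Ioo (0:ℝ) 1, x ^ i / (1 + x ^ p))
      = (π / Real.sin (π * ((j+1 : ℕ) / p))) / p := by
  have hp0 : 0 < p := by omega
  have hj : j + 1 < p := by omega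
  rw [← int_Ioi1 hp, ← int_Ioi_eq hp0 hj]
  have hsplit : Set.Ioi (0:ℝ) = Set.Ioo (0:ℝ) 1 ∪ Set.Ici (1:ℝ) := by
    ext x; simp only [Set.mem_Ioi, Set.mem_union, Set.mem_Ioo, Set.mem_Ici]
    constructor
    · intro hx; by_cases h : x < 1
      · exact Or.inl ⟨hx, h⟩
      · exact Or.inr (not_lt.1 h)
    · rintro (⟨h1, _⟩ | h1) <;> linarith
  rw [hsplit, MeasureTheory.setIntegral_union (by
      intro s hs1 hs2 x hx
      exact absurd ((hs2 hx) : (1:ℝ) ≤ x) (not_le.2 (hs1 hx).2))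
    measurableSet_Ici (intgOn_Ioo j p)
    ((integrableOn_Ici_iff_integrableOn_Ioi).2 (intgOn_Ioi1 hp)),
    MeasureTheory.integral_Ici_eq_integral_Ioi]

lemma log_int {p : ℕ} (hp : 0 < p) :
    ∫ x in Set.Ioo (0:ℝ) 1, x ^ (p-1) / (1 + x ^ p) = Real.log 2 / p := by
  have hpR : (0:ℝ) < p := by exact_mod_cast hp
  rw [← MeasureTheory.integral_Ioc_eq_integral_Ioo,
    ← intervalIntegral.integral_of_le zero_le_one]
  have hderiv : ∀ x ∈ Set.uIcc (0:ℝ) 1, HasDerivAt (fun x : ℝ => Real.log (1 + x ^ p) / p)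
      (x ^ (p-1) / (1 + x ^ p)) x := by
    intro x hx
    rw [Set.uIcc_of_le zero_le_one] at hx
    have hd : HasDerivAt (fun x : ℝ => 1 + x ^ p) ((p:ℝ) * x ^ (p-1)) x :=
      (hasDerivAt_pow p x).const_add 1
    have hlog := (Real.hasDerivAt_log (den_pos hx.1 p).ne').comp x hd
    have := hlog.div_const (p:ℝ)
    refine this.congr_deriv ?_
    have hne := (den_pos hx.1 p).ne'
    rw [div_eq_iff hpR.ne']
    ring
  have hint : IntervalIntegrable (fun x : ℝ => x ^ (p-1) / (1 + x ^ p)) volume 0 1 := by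
    apply ContinuousOn.intervalIntegrable
    rw [Set.uIcc_of_le zero_le_one]
    exact (Continuous.continuousOn (by continuity)).div
      (Continuous.continuousOn (by continuity)) (fun x hx => (den_pos hx.1 p).ne')
  rw [intervalIntegral.integral_eq_sub_of_hasDerivAt hderiv hint]
  simp [zero_pow hp.ne', Real.log_one]
  norm_num

lemma pow_int (m : ℕ) : ∫ x in Set.Ioo (0:ℝ) 1, x ^ m = ((m:ℝ)+1)⁻¹ := by
  rw [← MeasureTheory.integral_Ioc_eq_integral_Ioo,
    ← intervalIntegral.integral_of_le zero_le_one, integral_pow]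
  norm_num

lemma key_identity {p j N : ℕ} {x : ℝ} (hx : x ∈ Set.Ioo (0:ℝ) 1) :
    x ^ j / (1 + x ^ p) - ∑ n ∈ Finset.range N, (-1:ℝ)^n * x ^ (p*n+j)
      = (-1:ℝ)^N * (x ^ (p*N+j) / (1 + x ^ p)) := by
  have hx0 : (0:ℝ) < x := hx.1
  have hne : (0:ℝ) < 1 + x ^ p := den_pos hx0.le p
  have hne2 : (-x^p) - 1 ≠ 0 := by nlinarith
  have hgeom := geom_sum_eq (show (-x^p : ℝ) ≠ 1 by nlinarith [pow_nonneg hx0.le p]) N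
  have e : ∀ n : ℕ, (-1:ℝ)^n * x^(p*n+j) = x^j * (-x^p)^n := by
    intro n; rw [pow_add, pow_mul, neg_pow]; ring
  rw [Finset.sum_congr rfl (fun n _ => e n), ← Finset.mul_sum, hgeom,
    pow_add, pow_mul, neg_pow]
  field_simp
  ring

lemma intgOn_powmul (c : ℝ) (m : ℕ) :
    IntegrableOn (fun x : ℝ => c * x ^ m) (Set.Ioo (0:ℝ) 1) :=
  (((continuous_const.mul (continuous_pow m)).continuousOn).integrableOn_compact
    isCompact_Icc).mono_set Set.Ioo_subset_Icc_self

lemma T_lim {p j : ℕ} (hp : 0 < p) :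
    Tendsto (fun N => ∑ n ∈ Finset.range N, (-1:ℝ)^n * ((p*n+j+1 : ℕ) : ℝ)⁻¹) atTop
      (𝓝 (∫ x in Set.Ioo (0:ℝ) 1, x ^ j / (1 + x ^ p))) := by
  set L : ℝ := ∫ x in Set.Ioo (0:ℝ) 1, x ^ j / (1 + x ^ p) with hL
  have key : ∀ N : ℕ, L - ∑ n ∈ Finset.range N, (-1:ℝ)^n * ((p*n+j+1 : ℕ) : ℝ)⁻¹
      = (-1:ℝ)^N * ∫ x in Set.Ioo (0:ℝ) 1, x ^ (p*N+j) / (1 + x ^ p) := by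
    intro N
    have hsum : ∑ n ∈ Finset.range N, (-1:ℝ)^n * ((p*n+j+1 : ℕ) : ℝ)⁻¹
        = ∫ x in Set.Ioo (0:ℝ) 1, ∑ n ∈ Finset.range N, (-1:ℝ)^n * x ^ (p*n+j) := by
      rw [MeasureTheory.integral_finset_sum _ (fun n _ => intgOn_powmul _ _)]
      refine Finset.sum_congr rfl (fun n _ => ?_)
      rw [MeasureTheory.integral_const_mul, pow_int]
      push_cast; ring_nf
    rw [hsum, ← MeasureTheory.integral_const_mul, hL,
      ← MeasureTheory.integral_sub (intgOn_Ioo j p)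
        (MeasureTheory.integrable_finset_sum _ (fun n _ => intgOn_powmul _ _))]
    exact setIntegral_congr_fun measurableSet_Ioo
      (fun x hx => by rw [key_identity hx])
  have hdiff : Tendsto (fun N => L - ∑ n ∈ Finset.range N,
      (-1:ℝ)^n * ((p*n+j+1 : ℕ) : ℝ)⁻¹) atTop (𝓝 0) := by
    rw [tendsto_zero_iff_norm_tendsto_zero]
    refine squeeze_zero (fun N => norm_nonneg _) (fun N => ?_)
      (tendsto_one_div_add_atTop_nhds_zero_nat.congr (fun n => by rw [one_div]))
    rw [key N, norm_mul, norm_pow, norm_neg, norm_one, one_pow, one_mul, Real.norm_eq_abs]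
    have hnn : (0:ℝ) ≤ ∫ x in Set.Ioo (0:ℝ) 1, x ^ (p*N+j) / (1 + x ^ p) :=
      setIntegral_nonneg measurableSet_Ioo (fun x hx => by
        exact div_nonneg (pow_nonneg hx.1.le _) (den_pos hx.1.le p).le)
    rw [abs_of_nonneg hnn]
    have hle : ∫ x in Set.Ioo (0:ℝ) 1, x ^ (p*N+j) / (1 + x ^ p)
        ≤ ∫ x in Set.Ioo (0:ℝ) 1, x ^ (p*N+j) := by
      refine setIntegral_mono_on (intgOn_Ioo (p*N+j) p)
        (by simpa using intgOn_powmul 1 (p*N+j)) measurableSet_Ioo (fun x hx => ?_)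
      exact div_le_self (pow_nonneg hx.1.le _) (by nlinarith [pow_nonneg hx.1.le p])
    rw [pow_int] at hle
    refine hle.trans ?_
    rw [inv_le_inv₀ (by positivity) (by positivity)]
    have : N ≤ p * N + j := le_add_right (Nat.le_mul_of_pos_left N hp)
    exact_mod_cast Nat.succ_le_succ this
  have := hdiff.const_sub L
  simpa using this

/-- The `n`-th harmonic number `H_n = ∑_{k=1}^n 1/k` (with `H 0 = 0`). -/
noncomputable def H (n : ℕ) : ℝ := ∑ k ∈ Finset.range n, (1 : ℝ) / (k + 1)

theorem Ep_eq_csc_sum (p : ℕ) (hp : 0 < p) :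
    Tendsto (fun N => ∑ n ∈ Finset.range N,
        (-1 : ℝ) ^ n * (H (p * (n + 1)) - H (p * n))) atTop
      (𝓝 (Real.log 2 / p
          + (π / (2 * p)) * ∑ k ∈ Finset.Icc 1 (p - 1), 1 / Real.sin (k * π / p))) := by
  have hstep : ∀ N, ∑ n ∈ Finset.range N, (-1:ℝ)^n * (H (p*(n+1)) - H (p*n))
      = ∑ j ∈ Finset.range p, ∑ n ∈ Finset.range N, (-1:ℝ)^n * ((p*n+j+1 : ℕ):ℝ)⁻¹ := by
    intro N
    rw [Finset.sum_comm]
    refine Finset.sum_congr rfl (fun n _ => ?_)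
    have hd : H (p*(n+1)) - H (p*n) = ∑ j ∈ Finset.range p, ((p*n+j+1 : ℕ):ℝ)⁻¹ := by
      rw [H, H, ← Finset.sum_Ico_eq_sub _ (Nat.mul_le_mul_left p (Nat.le_succ n)),
        Finset.sum_Ico_eq_sum_range,
        show p*(n+1) - p*n = p by rw [Nat.mul_succ]; omega]
      refine Finset.sum_congr rfl (fun j _ => ?_)
      rw [one_div]
      congr 1
      push_cast
      ring
    rw [hd, Finset.mul_sum]
  have hlim := tendsto_finset_sum (Finset.range p)
    (fun j (_ : j ∈ Finset.range p) => T_lim (p := p) (j := j) hp)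
  have heq : (fun N => ∑ n ∈ Finset.range N, (-1:ℝ)^n * (H (p*(n+1)) - H (p*n)))
      = fun N => ∑ j ∈ Finset.range p, ∑ n ∈ Finset.range N,
          (-1:ℝ)^n * ((p*n+j+1 : ℕ):ℝ)⁻¹ := funext hstep
  rw [heq]
  have hval : ∑ j ∈ Finset.range p, (∫ x in Set.Ioo (0:ℝ) 1, x ^ j / (1 + x ^ p))
      = Real.log 2 / p
          + (π / (2 * p)) * ∑ k ∈ Finset.Icc 1 (p - 1), 1 / Real.sin (k * π / p) := by
    obtain ⟨q, rfl⟩ : ∃ q, p = q + 1 := ⟨p-1, (Nat.succ_pred_eq_of_pos hp).symm⟩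
    rw [Finset.sum_range_succ]
    have hlast : ∫ x in Set.Ioo (0:ℝ) 1, x ^ q / (1 + x ^ (q+1)) = Real.log 2 / (q+1 : ℕ) := by
      have := log_int (p := q+1) hp
      simpa using this
    have h2 : (2:ℝ) * ∑ j ∈ Finset.range q, (∫ x in Set.Ioo (0:ℝ) 1, x ^ j / (1 + x ^ (q+1)))
        = ∑ j ∈ Finset.range q, (π / Real.sin (π * ((j+1 : ℕ) / (q+1 : ℕ)))) / (q+1 : ℕ) := by
      have hrefl : ∑ j ∈ Finset.range q,
            (∫ x in Set.Ioo (0:ℝ) 1, x ^ (q-1-j) / (1 + x ^ (q+1)))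
          = ∑ j ∈ Finset.range q, (∫ x in Set.Ioo (0:ℝ) 1, x ^ j / (1 + x ^ (q+1))) :=
        Finset.sum_range_reflect (fun j => ∫ x in Set.Ioo (0:ℝ) 1, x ^ j / (1 + x ^ (q+1))) q
      calc (2:ℝ) * ∑ j ∈ Finset.range q, (∫ x in Set.Ioo (0:ℝ) 1, x ^ j / (1 + x ^ (q+1)))
          = ∑ j ∈ Finset.range q, ((∫ x in Set.Ioo (0:ℝ) 1, x ^ j / (1 + x ^ (q+1)))
              + (∫ x in Set.Ioo (0:ℝ) 1, x ^ (q-1-j) / (1 + x ^ (q+1)))) := by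
            rw [Finset.sum_add_distrib, hrefl]; ring
        _ = ∑ j ∈ Finset.range q, (π / Real.sin (π * ((j+1 : ℕ) / (q+1 : ℕ)))) / (q+1 : ℕ) := by
            refine Finset.sum_congr rfl (fun j hj => ?_)
            have hj' : j < q := Finset.mem_range.1 hj
            exact pair_eq (show q+1 = (q-1-j)+j+2 by omega)
    have hIcc : Finset.Icc 1 (q+1-1) = Finset.Ico 1 (q+1) := by
      rw [show q+1-1 = q by omega]; ext; simp only [Finset.mem_Icc, Finset.mem_Ico]; omega
    rw [hlast, hIcc, Finset.sum_Ico_eq_sum_range, show q+1-1 = q by omega]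
    have hfin : ∑ j ∈ Finset.range q, (∫ x in Set.Ioo (0:ℝ) 1, x ^ j / (1 + x ^ (q+1)))
        = (π / (2 * ((q:ℝ)+1))) * ∑ i ∈ Finset.range q,
            1 / Real.sin (((1+i : ℕ) : ℝ) * π / ((q+1 : ℕ) : ℝ)) := by
      have := h2
      rw [Finset.mul_sum]
      apply mul_left_cancel₀ (two_ne_zero (α := ℝ))
      rw [this, Finset.mul_sum]
      refine Finset.sum_congr rfl (fun j _ => ?_)
      have harg : π * (((j+1 : ℕ) : ℝ) / ((q+1 : ℕ) : ℝ))
          = ((1+j : ℕ) : ℝ) * π / ((q+1 : ℕ) : ℝ) := by push_cast; ring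
      rw [harg]
      push_cast
      rw [show (2:ℝ) * ((q:ℝ)+1) = ((q:ℝ)+1) * 2 by ring, ← div_div]
      ring
    rw [hfin]
    push_cast
    ring
  rw [← hval]
  exact hlim
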